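/- Let H be a D×D Hermitian matrix whose spectrum has non-degenerate gaps, with eigenvalues E_1, …, E_D and orthonormal eigenbasis |1⟩, …, |D⟩. Let |φ⟩ ∈ ℂ^D be a unit vector, set c_j := ⟨j|φ⟩, D_eff := (Σ_j |c_j|⁴)^{−1}, and |φ(t)⟩ := e^{−iHt}|φ⟩. Then for every D×D complex matrix B, with B̄ := Σ_j |c_j|² ⟨j|B|j⟩, the limit ΔB := lim_{τ→∞} (1/τ) ∫₀^τ |⟨φ(t)|B|φ(t)⟩ − B̄|² dt exists and satisfies ΔB ≤ ‖B‖² / D_eff, where ‖B‖ is the operator norm. -/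

import Mathlib

open MeasureTheory ProbabilityTheory Matrix Finset
open scoped Matrix ComplexOrder Classical

noncomputable section

/-- The Hilbert space basis of `N` qubits is indexed by `Fin N → Bool`. -/
abbrev QOp (N : ℕ) := Matrix (Fin N → Bool) (Fin N → Bool) ℂ

/-- Jordan–Wigner annihilation operator `a_j = Z^{⊗(j-1)} ⊗ |0⟩⟨1| ⊗ I`. -/
def aOp (N : ℕ) (j : Fin N) : QOp N := fun x y =>
  if x j = false ∧ y j = true ∧ ∀ i, i ≠ j → x i = y i then
    ∏ i ∈ Finset.univ.filter (fun i => i < j), (if y i then (-1 : ℂ) else 1)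
  else 0

/-- The vacuum state `|0…0⟩`. -/
def vac (N : ℕ) : (Fin N → Bool) → ℂ := fun x => if x = fun _ => false then 1 else 0

/-- `|φ_n⟩ = a_1† a_2† ⋯ a_n† |0⟩`. -/
def phiState (N n : ℕ) : (Fin N → Bool) → ℂ :=
  ((((List.finRange N).filter (fun j => decide (j.val < n))).map
    (fun j => (aOp N j)ᴴ)).prod) *ᵥ vac N

/-- Rank-one projector `|v⟩⟨v|`. -/
def outer (N : ℕ) (v : (Fin N → Bool) → ℂ) : QOp N := Matrix.vecMulVec v (star v)

/-- `H_SYK2 = Σ_{j,k} h_{jk} a_j† a_k`. -/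
def HSYK2 (N : ℕ) (h : Matrix (Fin N) (Fin N) ℂ) : QOp N :=
  ∑ j, ∑ k, h j k • ((aOp N j)ᴴ * aOp N k)

instance matrixMeasurableSpace {m n α : Type*} [MeasurableSpace α] :
    MeasurableSpace (Matrix m n α) := MeasurableSpace.pi

/-- The GUE measure on `N × N` complex matrices. -/
def gueMeasure (N : ℕ) : Measure (Matrix (Fin N) (Fin N) ℂ) :=
  Measure.map
    (fun p : (Fin N → ℝ) × (Fin N → Fin N → ℝ) × (Fin N → Fin N → ℝ) =>
      Matrix.of fun j k =>
        if j = k then (p.1 j : ℂ)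
        else if j < k then (p.2.1 j k : ℂ) + (p.2.2 j k : ℂ) * Complex.I
        else (p.2.1 k j : ℂ) - (p.2.2 k j : ℂ) * Complex.I)
    ((Measure.pi fun _ => gaussianReal 0 1).prod
      ((Measure.pi fun _ => Measure.pi fun _ => gaussianReal 0 (1/2)).prod
        (Measure.pi fun _ => Measure.pi fun _ => gaussianReal 0 (1/2))))

/-- Von Neumann entropy `S(ρ) = -tr(ρ ln ρ)` via eigenvalues (0 for non-Hermitian junk). -/
def vnEntropy {m : Type*} [Fintype m] [DecidableEq m] (ρ : Matrix m m ℂ) : ℝ :=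
  if hρ : ρ.IsHermitian then -∑ i, hρ.eigenvalues i * Real.log (hρ.eigenvalues i) else 0

/-- Rényi-2 entropy `S₂(ρ) = -ln tr(ρ²)`. -/
def renyi2 {m : Type*} [Fintype m] (ρ : Matrix m m ℂ) : ℝ := -Real.log ((ρ * ρ).trace.re)

/-- Rényi-α entropy. -/
def renyiEntropy {m : Type*} [Fintype m] [DecidableEq m] (α : ℝ) (ρ : Matrix m m ℂ) : ℝ :=
  if hρ : ρ.IsHermitian then
    if α = 1 then -∑ i, hρ.eigenvalues i * Real.log (hρ.eigenvalues i)
    else (1 - α)⁻¹ * Real.log (∑ i, hρ.eigenvalues i ^ α)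
  else 0

/-- Binary entropy function. -/
def binEntropy (x : ℝ) : ℝ := -x * Real.log x - (1 - x) * Real.log (1 - x)

/-- All eigenvalues (roots of the characteristic polynomial, with multiplicity) are distinct. -/
def NondegSpectrum {m : Type*} [Fintype m] [DecidableEq m] (M : Matrix m m ℂ) : Prop :=
  M.charpoly.roots.Nodup

/-- The spectrum has non-degenerate gaps. -/
def NondegGaps {m : Type*} [Fintype m] [DecidableEq m] (M : Matrix m m ℂ) : Prop :=
  M.charpoly.roots.Nodup ∧
  ∀ a ∈ M.charpoly.roots, ∀ b ∈ M.charpoly.roots, ∀ c ∈ M.charpoly.roots,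
    ∀ d ∈ M.charpoly.roots, a ≠ b → c ≠ d → a - b = c - d → a = c ∧ b = d

/-- The Jordan–Wigner image on modes `A` of the matrix unit `|y⟩⟨x|` of an `L`-mode system:
`(∏_{k : y_k = 1, increasing} a_{i_k}†) (∏_k a_{i_k} a_{i_k}†) (∏_{k : x_k = 1, decreasing} a_{i_k})`
where `i_1 < ⋯ < i_L` enumerates `A`. -/
def hatUnit (N L : ℕ) (ι : Fin L → Fin N) (y x : Fin L → Bool) : QOp N :=
  ((((List.finRange L).filter (fun k => y k)).map (fun k => (aOp N (ι k))ᴴ)).prod) *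
  (((List.finRange L).map (fun k => aOp N (ι k) * (aOp N (ι k))ᴴ)).prod) *
  (((((List.finRange L).filter (fun k => x k)).map (fun k => aOp N (ι k))).reverse).prod)

/-- The fermionic reduced density matrix of `ρ` on the set `A` of `L` modes, i.e. the unique
`2^L × 2^L` matrix with `tr(ρ_A X) = tr(ρ X̂)` for all polynomials `X` in the `L`-mode
creation/annihilation operators, `X̂` being the corresponding polynomial in `{a_j, a_j†}_{j ∈ A}`
(modes taken in increasing order). -/
def fermRDM (N L : ℕ) (A : Finset (Fin N)) (hA : A.card = L) (ρ : QOp N) :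
    Matrix (Fin L → Bool) (Fin L → Bool) ℂ :=
  fun x y => (ρ * hatUnit N L (fun k => A.orderEmbOfFin hA k) y x).trace

/-- Time evolution `e^{-iHt} v`. -/
def evolve (N : ℕ) (H : QOp N) (t : ℝ) (v : (Fin N → Bool) → ℂ) : (Fin N → Bool) → ℂ :=
  NormedSpace.exp ((-(t : ℂ) * Complex.I) • H) *ᵥ v

/-- Qubit partial trace onto the qubits in `A`. -/
def ptrace {N : ℕ} (A : Finset (Fin N)) (ρ : QOp N) :
    Matrix ({i // i ∈ A} → Bool) ({i // i ∈ A} → Bool) ℂ :=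
  fun x y => ∑ z : {i : Fin N // i ∉ A} → Bool,
    ρ (fun i => if h : i ∈ A then x ⟨i, h⟩ else z ⟨i, h⟩)
      (fun i => if h : i ∈ A then y ⟨i, h⟩ else z ⟨i, h⟩)


/-- Operator (ℓ²→ℓ²) norm of a matrix. -/
def opNorm {m : Type*} [Fintype m] [DecidableEq m] (B : Matrix m m ℂ) : ℝ :=
  ‖(Matrix.toEuclideanCLM (𝕜 := ℂ) B : EuclideanSpace ℂ m →L[ℂ] EuclideanSpace ℂ m)‖


set_option maxHeartbeats 1000000
set_option synthInstance.maxHeartbeats 400000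

section FluctAuxSec

namespace FluctAux

variable {D : ℕ}

/-- mulVec by a fixed vector, as a linear map in the matrix. -/
def mulVecCLM (w : Fin D → ℂ) : Matrix (Fin D) (Fin D) ℂ →ₗ[ℂ] (Fin D → ℂ) where
  toFun M := M *ᵥ w
  map_add' A B := Matrix.add_mulVec A B w
  map_smul' c A := Matrix.smul_mulVec c A w

lemma exp_mulVec_eigen (A : Matrix (Fin D) (Fin D) ℂ) (lam : ℂ) (w : Fin D → ℂ)
    (h : A *ᵥ w = lam • w) :
    NormedSpace.exp A *ᵥ w = Complex.exp lam • w := by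
  letI : SeminormedRing (Matrix (Fin D) (Fin D) ℂ) := Matrix.linftyOpSemiNormedRing
  letI : NormedRing (Matrix (Fin D) (Fin D) ℂ) := Matrix.linftyOpNormedRing
  letI : NormedAlgebra ℂ (Matrix (Fin D) (Fin D) ℂ) := Matrix.linftyOpNormedAlgebra
  have hpow : ∀ n : ℕ, A ^ n *ᵥ w = (lam ^ n) • w := by
    intro n
    induction n with
    | zero => simp
    | succ n ih =>
      rw [pow_succ', pow_succ', ← Matrix.mulVec_mulVec, ih, Matrix.mulVec_smul, h,
        smul_smul, mul_comm]
  have hsum : Summable fun n : ℕ => ((Nat.factorial n : ℂ))⁻¹ • A ^ n :=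
    NormedSpace.expSeries_summable' (𝕂 := ℂ) A
  have hcont : Continuous (mulVecCLM (D := D) w) :=
    LinearMap.continuous_of_finiteDimensional _
  have := (hsum.hasSum.map (mulVecCLM (D := D) w) hcont).tsum_eq
  rw [NormedSpace.exp_eq_tsum ℂ]
  have hmv : (mulVecCLM (D := D) w) (∑' n : ℕ, (Nat.factorial n : ℂ)⁻¹ • A ^ n)
      = ∑' n : ℕ, (mulVecCLM (D := D) w) ((Nat.factorial n : ℂ)⁻¹ • A ^ n) := this.symm
  have hterm : ∀ n : ℕ, (mulVecCLM (D := D) w) ((Nat.factorial n : ℂ)⁻¹ • A ^ n)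
      = ((Nat.factorial n : ℂ)⁻¹ * lam ^ n) • w := by
    intro n
    show ((Nat.factorial n : ℂ)⁻¹ • A ^ n) *ᵥ w = _
    rw [Matrix.smul_mulVec, hpow, smul_smul]
  have : (mulVecCLM (D := D) w) (∑' n : ℕ, (Nat.factorial n : ℂ)⁻¹ • A ^ n)
      = (∑' n : ℕ, (Nat.factorial n : ℂ)⁻¹ * lam ^ n) • w := by
    rw [hmv]
    simp_rw [hterm]
    exact Summable.tsum_smul_const (NormedSpace.expSeries_summable' (𝕂 := ℂ) lam) w
  refine this.trans ?_
  congr 1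
  rw [Complex.exp_eq_exp_ℂ, NormedSpace.exp_eq_tsum ℂ]
  simp [smul_eq_mul]

lemma charmatrix_diagonal' (d : Fin D → ℂ) :
    charmatrix (Matrix.diagonal d)
      = Matrix.diagonal (fun i => (Polynomial.X : Polynomial ℂ) - Polynomial.C (d i)) := by
  ext i j
  by_cases h : i = j
  · subst h; simp
  · rw [charmatrix_apply_ne _ _ _ h, Matrix.diagonal_apply_ne _ h, Matrix.diagonal_apply_ne _ h]
    simp

lemma charpoly_of_unitary_diag (H V : Matrix (Fin D) (Fin D) ℂ) (d : Fin D → ℂ)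
    (hV : V * Vᴴ = 1) (hHV : H * V = V * Matrix.diagonal d) :
    H.charpoly = ∏ j, ((Polynomial.X : Polynomial ℂ) - Polynomial.C (d j)) := by
  have hH : H = V * Matrix.diagonal d * Vᴴ := by
    calc H = H * (V * Vᴴ) := by rw [hV, mul_one]
    _ = (H * V) * Vᴴ := by rw [Matrix.mul_assoc]
    _ = V * Matrix.diagonal d * Vᴴ := by rw [hHV]
  set Cm : Matrix (Fin D) (Fin D) ℂ →+* Matrix (Fin D) (Fin D) (Polynomial ℂ) :=
    (Polynomial.C : ℂ →+* Polynomial ℂ).mapMatrix with hCm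
  have hVV : Cm V * Cm Vᴴ = 1 := by rw [← _root_.map_mul, hV, _root_.map_one]
  have hcomm : Matrix.scalar (Fin D) (Polynomial.X : Polynomial ℂ) * (Cm V)
      = Cm V * Matrix.scalar (Fin D) Polynomial.X :=
    (Matrix.scalar_commute (Polynomial.X : Polynomial ℂ) (fun r => Commute.all _ _) (Cm V)).eq
  have hch : charmatrix H = Cm V * charmatrix (Matrix.diagonal d) * Cm Vᴴ := by
    unfold charmatrix
    rw [Matrix.mul_sub, Matrix.sub_mul, ← hcomm,
      Matrix.mul_assoc (Matrix.scalar (Fin D) Polynomial.X), hVV, Matrix.mul_one]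
    congr 1
    rw [hH]
    rw [_root_.map_mul, _root_.map_mul]
  have hdet : H.charpoly
      = (charmatrix (Matrix.diagonal d)).det * ((Cm V).det * (Cm Vᴴ).det) := by
    rw [Matrix.charpoly, hch, Matrix.det_mul, Matrix.det_mul]; ring
  rw [hdet, ← Matrix.det_mul, hVV, Matrix.det_one, mul_one, charmatrix_diagonal',
    Matrix.det_diagonal]

lemma roots_of_unitary_diag (H V : Matrix (Fin D) (Fin D) ℂ) (d : Fin D → ℂ)
    (hV : V * Vᴴ = 1) (hHV : H * V = V * Matrix.diagonal d) :
    H.charpoly.roots = Multiset.map d Finset.univ.val := by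
  rw [charpoly_of_unitary_diag H V d hV hHV]
  have : ∏ j, ((Polynomial.X : Polynomial ℂ) - Polynomial.C (d j))
      = ((Multiset.map d Finset.univ.val).map
          (fun a => (Polynomial.X : Polynomial ℂ) - Polynomial.C a)).prod := by
    rw [Multiset.map_map]
    rfl
  rw [this, Polynomial.roots_multiset_prod_X_sub_C]

lemma dot_star_self (y : Fin D → ℂ) :
    star y ⬝ᵥ y = ((∑ i, ‖y i‖ ^ 2 : ℝ) : ℂ) := by
  simp only [dotProduct, Pi.star_apply, Complex.star_def]
  push_cast
  congr 1
  ext i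
  rw [mul_comm, Complex.mul_conj, ← Complex.sq_norm]
  push_cast
  ring

lemma coords_sq_sum (V : Matrix (Fin D) (Fin D) ℂ) (hV : V * Vᴴ = 1) (w : Fin D → ℂ) :
    ∑ j, ‖(Vᴴ *ᵥ w) j‖ ^ 2 = ∑ i, ‖w i‖ ^ 2 := by
  have := dot_star_self (Vᴴ *ᵥ w)
  rw [Matrix.star_mulVec, Matrix.conjTranspose_conjTranspose,
    ← Matrix.dotProduct_mulVec, Matrix.mulVec_mulVec, hV, Matrix.one_mulVec,
    dot_star_self w] at this
  exact_mod_cast this.symm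

lemma mulVec_l2_bound (B : Matrix (Fin D) (Fin D) ℂ) (w : Fin D → ℂ) :
    ∑ i, ‖(B *ᵥ w) i‖ ^ 2 ≤
      ‖(Matrix.toEuclideanCLM (𝕜 := ℂ) B :
          EuclideanSpace ℂ (Fin D) →L[ℂ] EuclideanSpace ℂ (Fin D))‖ ^ 2
        * ∑ i, ‖w i‖ ^ 2 := by
  set ew : EuclideanSpace ℂ (Fin D) := (WithLp.equiv 2 (Fin D → ℂ)).symm w with hew
  have hnorm_sq : ∀ y : Fin D → ℂ,
      ‖(WithLp.equiv 2 (Fin D → ℂ)).symm y‖ ^ 2 = ∑ i, ‖y i‖ ^ 2 := by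
    intro y
    rw [EuclideanSpace.norm_eq]
    rw [Real.sq_sqrt (by positivity)]
    rfl
  have happ : (Matrix.toEuclideanCLM (𝕜 := ℂ) B) ew
      = (WithLp.equiv 2 (Fin D → ℂ)).symm (B *ᵥ w) := by
    rw [hew]
    rfl
  calc ∑ i, ‖(B *ᵥ w) i‖ ^ 2
      = ‖(Matrix.toEuclideanCLM (𝕜 := ℂ) B) ew‖ ^ 2 := by rw [happ, hnorm_sq]
    _ ≤ (‖(Matrix.toEuclideanCLM (𝕜 := ℂ) B :
          EuclideanSpace ℂ (Fin D) →L[ℂ] EuclideanSpace ℂ (Fin D))‖ * ‖ew‖) ^ 2 := by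
        have := ContinuousLinearMap.le_opNorm (Matrix.toEuclideanCLM (𝕜 := ℂ) B) ew
        exact pow_le_pow_left₀ (norm_nonneg _) this 2
    _ = _ := by rw [mul_pow, hew, hnorm_sq]

lemma opNorm_conjTranspose' (B : Matrix (Fin D) (Fin D) ℂ) :
    ‖(Matrix.toEuclideanCLM (𝕜 := ℂ) Bᴴ :
        EuclideanSpace ℂ (Fin D) →L[ℂ] EuclideanSpace ℂ (Fin D))‖
    = ‖(Matrix.toEuclideanCLM (𝕜 := ℂ) B :
        EuclideanSpace ℂ (Fin D) →L[ℂ] EuclideanSpace ℂ (Fin D))‖ := by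
  have : Bᴴ = star B := rfl
  rw [this, map_star, ContinuousLinearMap.star_eq_adjoint]
  exact ContinuousLinearMap.adjoint.norm_map _

lemma cesaro_exp (δ : ℝ) :
    Filter.Tendsto
      (fun τ : ℝ => (1/τ : ℂ) * ∫ t in (0:ℝ)..τ, Complex.exp ((δ : ℂ) * Complex.I * t))
      Filter.atTop (nhds (if δ = 0 then (1:ℂ) else 0)) := by
  by_cases hδ : δ = 0
  · subst hδ
    simp only [if_pos rfl]
    have hev : ∀ᶠ τ : ℝ in Filter.atTop,
        (1/τ : ℂ) * ∫ t in (0:ℝ)..τ, Complex.exp ((0 : ℂ) * Complex.I * t) = 1 := by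
      filter_upwards [Filter.eventually_gt_atTop (0:ℝ)] with τ hτ
      simp only [Complex.ofReal_zero, zero_mul, Complex.exp_zero]
      rw [intervalIntegral.integral_const]
      simp only [sub_zero, smul_eq_mul, mul_one, Complex.real_smul]
      rw [one_div, inv_mul_cancel₀]
      exact_mod_cast hτ.ne'
    exact Filter.Tendsto.congr' (hev.mono fun τ h => h.symm) tendsto_const_nhds
  · simp only [if_neg hδ]
    set c : ℂ := (δ : ℂ) * Complex.I with hc
    have hcne : c ≠ 0 := by
      simp [hc, Complex.ext_iff, hδ, Complex.I_ne_zero]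
    have hint : ∀ τ : ℝ, (∫ t in (0:ℝ)..τ, Complex.exp (c * t))
        = (Complex.exp (c * τ) - 1) / c := by
      intro τ
      rw [integral_exp_mul_complex hcne]
      norm_num
    have hbound : ∀ᶠ τ : ℝ in Filter.atTop,
        ‖(1/τ : ℂ) * ∫ t in (0:ℝ)..τ, Complex.exp ((δ : ℂ) * Complex.I * t)‖
          ≤ (2 / ‖c‖) * (1/τ) := by
      filter_upwards [Filter.eventually_gt_atTop (0:ℝ)] with τ hτ
      have h0 : (∫ t in (0:ℝ)..τ, Complex.exp ((δ : ℂ) * Complex.I * t))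
          = (Complex.exp (c * τ) - 1) / c := hint τ
      rw [h0, norm_mul, norm_div, norm_one, Complex.norm_real, Real.norm_of_nonneg hτ.le,
        norm_div, mul_comm]
      have h2 : ‖Complex.exp (c * τ) - 1‖ ≤ 2 := by
        calc ‖Complex.exp (c * τ) - 1‖ ≤ ‖Complex.exp (c * τ)‖ + ‖(1:ℂ)‖ := norm_sub_le _ _
        _ ≤ 2 := by
          rw [Complex.norm_exp]
          have : (c * τ).re = 0 := by simp [hc]
          rw [this]
          norm_num
      gcongr
    have hlim : Filter.Tendsto (fun τ : ℝ => (2 / ‖c‖) * (1/τ)) Filter.atTop (nhds 0) := by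
      have := tendsto_inv_atTop_zero (𝕜 := ℝ)
      simpa [one_div] using this.const_mul (2 / ‖c‖)
    exact squeeze_zero_norm' hbound hlim

lemma sum_diag {M : Type*} [AddCommMonoid M] (f : Fin D × Fin D → M) :
    ∑ p ∈ Finset.filter (fun p : Fin D × Fin D => p.1 = p.2) (Finset.univ ×ˢ Finset.univ),
        f p = ∑ j, f (j, j) := by
  refine Finset.sum_nbij' (fun p => p.1) (fun j => (j, j)) ?_ ?_ ?_ ?_ ?_
  · intro a _; exact Finset.mem_univ _
  · intro a _
    simp
  · rintro ⟨x, y⟩ ha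
    have h : x = y := by simpa using (Finset.mem_filter.mp ha).2
    subst h; rfl
  · intro a _; rfl
  · rintro ⟨x, y⟩ ha
    have h : x = y := by simpa using (Finset.mem_filter.mp ha).2
    subst h; rfl

end FluctAux

end FluctAuxSec

/-- Equilibration of expectation values: the time-averaged fluctuation of
`⟨φ(t)|B|φ(t)⟩` around `B̄` exists and is at most `‖B‖²/D_eff`. -/
theorem fluctuation_bound (D : ℕ) (H : Matrix (Fin D) (Fin D) ℂ) (hH : H.IsHermitian)
    (hgap : NondegGaps H) (E : Fin D → ℝ) (v : Fin D → (Fin D → ℂ))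
    (horth : ∀ i j, star (v i) ⬝ᵥ v j = if i = j then (1 : ℂ) else 0)
    (heig : ∀ j, H *ᵥ v j = (E j : ℂ) • v j)
    (φ : Fin D → ℂ) (hφ : star φ ⬝ᵥ φ = 1) (B : Matrix (Fin D) (Fin D) ℂ) :
    ∃ Δ : ℝ,
      Filter.Tendsto (fun τ : ℝ => (1 / τ) * ∫ t in (0:ℝ)..τ,
          ‖(star (NormedSpace.exp ((-(t : ℂ) * Complex.I) • H) *ᵥ φ)) ⬝ᵥ
              (B *ᵥ (NormedSpace.exp ((-(t : ℂ) * Complex.I) • H) *ᵥ φ))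
            - ∑ j, ((‖star (v j) ⬝ᵥ φ‖ ^ 2 : ℝ) : ℂ) *
                (star (v j) ⬝ᵥ (B *ᵥ v j))‖ ^ 2)
        Filter.atTop (nhds Δ) ∧
      Δ ≤ opNorm B ^ 2 / (∑ j, ‖star (v j) ⬝ᵥ φ‖ ^ 4)⁻¹ := by
  classical
  -- abbreviations
  set c : Fin D → ℂ := fun j => star (v j) ⬝ᵥ φ with hc
  set Bt : Fin D → Fin D → ℂ := fun j k => star (v j) ⬝ᵥ (B *ᵥ v k) with hBt
  set z : Fin D × Fin D → ℂ := fun p => (starRingEnd ℂ) (c p.1) * c p.2 * Bt p.1 p.2 with hz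
  set S : Finset (Fin D × Fin D) := Finset.univ.filter (fun p => p.1 ≠ p.2) with hS
  set ω : Fin D × Fin D → ℝ := fun p => E p.1 - E p.2 with hω
  set V : Matrix (Fin D) (Fin D) ℂ := Matrix.of (fun i j => v j i) with hVdef
  have habs : ∀ w : ℂ, ‖w‖ ^ 2 = (w * (starRingEnd ℂ) w).re := by
    intro w
    rw [Complex.mul_conj, Complex.ofReal_re, Complex.sq_norm]
  have hVdot : ∀ (w : Fin D → ℂ) (j : Fin D), (Vᴴ *ᵥ w) j = star (v j) ⬝ᵥ w := by
    intro w j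
    simp [Matrix.mulVec, Matrix.conjTranspose_apply, dotProduct, hVdef]
  have hV'V : Vᴴ * V = 1 := by
    ext i j
    rw [Matrix.mul_apply, Matrix.one_apply, ← horth i j]
    simp [Matrix.conjTranspose_apply, dotProduct, hVdef]
  have hVV : V * Vᴴ = 1 := mul_eq_one_comm.mp hV'V
  -- spectral facts
  have hHV : H * V = V * Matrix.diagonal (fun j => (E j : ℂ)) := by
    ext i j
    rw [Matrix.mul_diagonal]
    have h1 := congrFun (heig j) i
    simp only [Matrix.mulVec, Pi.smul_apply, smul_eq_mul, dotProduct] at h1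
    rw [Matrix.mul_apply]
    simp only [hVdef, Matrix.of_apply]
    rw [h1, mul_comm]
  have hroots : H.charpoly.roots = Multiset.map (fun j => (E j : ℂ)) Finset.univ.val :=
    FluctAux.roots_of_unitary_diag H V _ hVV hHV
  have hEinj : ∀ j k : Fin D, (E j : ℂ) = (E k : ℂ) → j = k := by
    intro j k hjk
    have hnd := hgap.1
    rw [hroots] at hnd
    exact Multiset.inj_on_of_nodup_map hnd j (Finset.mem_val.mpr (Finset.mem_univ j))
      k (Finset.mem_val.mpr (Finset.mem_univ k)) hjk
  have hmem : ∀ j : Fin D, ((E j : ℂ)) ∈ H.charpoly.roots := by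
    intro j
    rw [hroots]
    exact Multiset.mem_map.mpr ⟨j, Finset.mem_val.mpr (Finset.mem_univ j), rfl⟩
  have hgapP : ∀ P ∈ S, ∀ Q ∈ S, ω P = ω Q → P = Q := by
    intro P hP Q hQ hw
    have h1 : P.1 ≠ P.2 := (Finset.mem_filter.mp hP).2
    have h2 : Q.1 ≠ Q.2 := (Finset.mem_filter.mp hQ).2
    have ha : ((E P.1 : ℂ)) ≠ (E P.2 : ℂ) := fun h => h1 (hEinj _ _ h)
    have hcc : ((E Q.1 : ℂ)) ≠ (E Q.2 : ℂ) := fun h => h2 (hEinj _ _ h)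
    have hsub : (E P.1 : ℂ) - (E P.2 : ℂ) = (E Q.1 : ℂ) - (E Q.2 : ℂ) := by
      have h3 : ((E P.1 - E P.2 : ℝ) : ℂ) = ((E Q.1 - E Q.2 : ℝ) : ℂ) := by
        exact_mod_cast congrArg (fun x : ℝ => (x : ℂ)) hw
      push_cast at h3
      exact h3
    obtain ⟨hac, hbd⟩ := hgap.2 _ (hmem P.1) _ (hmem P.2) _ (hmem Q.1) _ (hmem Q.2) ha hcc hsub
    exact Prod.ext (hEinj _ _ hac) (hEinj _ _ hbd)
  -- expansion of φ
  have hVc : Vᴴ *ᵥ φ = c := by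
    ext j
    rw [hVdot]
  have hφexp : φ = ∑ j, c j • v j := by
    have h1 : V *ᵥ (Vᴴ *ᵥ φ) = φ := by rw [Matrix.mulVec_mulVec, hVV, Matrix.one_mulVec]
    rw [hVc] at h1
    rw [← h1]
    ext i
    simp only [Matrix.mulVec, dotProduct, hVdef, Matrix.of_apply, Finset.sum_apply,
      Pi.smul_apply, smul_eq_mul]
    exact Finset.sum_congr rfl fun j _ => mul_comm _ _
  have hlin : ∀ (M : Matrix (Fin D) (Fin D) ℂ) (x : Fin D → ℂ),
      M *ᵥ (∑ j, x j • v j) = ∑ j, x j • (M *ᵥ v j) := by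
    intro M x
    rw [← Matrix.mulVecLin_apply, map_sum]
    simp only [LinearMap.map_smul, Matrix.mulVecLin_apply]
  -- evolution
  set a : ℝ → Fin D → ℂ :=
    fun t j => c j * Complex.exp (-(t : ℂ) * Complex.I * (E j : ℂ)) with haa
  have hu : ∀ t : ℝ,
      (NormedSpace.exp ((-(t : ℂ) * Complex.I) • H) *ᵥ φ) = ∑ j, a t j • v j := by
    intro t
    rw [hφexp, hlin]
    refine Finset.sum_congr rfl fun j _ => ?_
    have heig' : ((-(t : ℂ) * Complex.I) • H) *ᵥ v j
        = ((-(t : ℂ) * Complex.I) * (E j : ℂ)) • v j := by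
      rw [Matrix.smul_mulVec, heig j, smul_smul]
    rw [FluctAux.exp_mulVec_eigen _ _ _ heig', smul_smul]
  have hstar : ∀ t : ℝ,
      star (∑ j, a t j • v j) = ∑ j, (starRingEnd ℂ) (a t j) • star (v j) := by
    intro t
    rw [star_sum]
    exact Finset.sum_congr rfl fun j _ => star_smul _ _
  have hquad : ∀ t : ℝ,
      star (∑ j, a t j • v j) ⬝ᵥ (B *ᵥ (∑ j, a t j • v j))
        = ∑ j, ∑ k, (starRingEnd ℂ) (a t j) * a t k * Bt j k := by
    intro t
    have hdl : ∀ (x : Fin D → Fin D → ℂ) (α : Fin D → ℂ) (y : Fin D → ℂ),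
        (∑ j, α j • x j) ⬝ᵥ y = ∑ j, α j * (x j ⬝ᵥ y) := by
      intro x α y
      simp only [dotProduct, Finset.sum_apply, Pi.smul_apply, smul_eq_mul,
        Finset.sum_mul, Finset.mul_sum]
      rw [Finset.sum_comm]
      refine Finset.sum_congr rfl fun j _ => Finset.sum_congr rfl fun i _ => by ring
    have hdr : ∀ (y : Fin D → ℂ) (x : Fin D → Fin D → ℂ) (α : Fin D → ℂ),
        y ⬝ᵥ (∑ j, α j • x j) = ∑ j, α j * (y ⬝ᵥ x j) := by
      intro y x α
      simp only [dotProduct, Finset.sum_apply, Pi.smul_apply, smul_eq_mul,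
        Finset.sum_mul, Finset.mul_sum]
      rw [Finset.sum_comm]
      refine Finset.sum_congr rfl fun j _ => Finset.sum_congr rfl fun i _ => by ring
    rw [hstar, hlin, hdl]
    refine Finset.sum_congr rfl fun j _ => ?_
    rw [hdr, Finset.mul_sum]
    refine Finset.sum_congr rfl fun k _ => ?_
    simp only [hBt]
    ring
  have hT : ∀ (t : ℝ) (p : Fin D × Fin D),
      (starRingEnd ℂ) (a t p.1) * a t p.2 * Bt p.1 p.2
        = z p * Complex.exp (((ω p : ℝ) : ℂ) * Complex.I * t) := by
    intro t p
    have h1 : (starRingEnd ℂ) (a t p.1)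
        = (starRingEnd ℂ) (c p.1) * Complex.exp ((t : ℂ) * Complex.I * (E p.1 : ℂ)) := by
      simp only [haa, _root_.map_mul, ← Complex.exp_conj]
      congr 2
      simp only [_root_.map_neg, Complex.conj_ofReal, Complex.conj_I]
      ring
    have h2 : Complex.exp ((t : ℂ) * Complex.I * (E p.1 : ℂ)) *
          Complex.exp (-(t : ℂ) * Complex.I * (E p.2 : ℂ))
        = Complex.exp (((ω p : ℝ) : ℂ) * Complex.I * t) := by
      rw [← Complex.exp_add]
      congr 1
      simp only [hω]
      push_cast
      ring
    calc (starRingEnd ℂ) (a t p.1) * a t p.2 * Bt p.1 p.2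
        = ((starRingEnd ℂ) (c p.1) * c p.2 * Bt p.1 p.2) *
            (Complex.exp ((t : ℂ) * Complex.I * (E p.1 : ℂ)) *
              Complex.exp (-(t : ℂ) * Complex.I * (E p.2 : ℂ))) := by
          rw [h1]
          simp only [haa]
          ring
      _ = z p * Complex.exp (((ω p : ℝ) : ℂ) * Complex.I * t) := by rw [h2, hz]
  have hzdiag : ∀ j, z (j, j) = ((‖c j‖ ^ 2 : ℝ) : ℂ) * Bt j j := by
    intro j
    simp only [hz]
    congr 1
    rw [mul_comm, Complex.mul_conj]
    norm_cast
    exact (Complex.sq_norm _).symm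
  -- key expansion of the fluctuation
  have hfd : ∀ t : ℝ,
      (star (NormedSpace.exp ((-(t : ℂ) * Complex.I) • H) *ᵥ φ)) ⬝ᵥ
          (B *ᵥ (NormedSpace.exp ((-(t : ℂ) * Complex.I) • H) *ᵥ φ))
        - ∑ j, ((‖star (v j) ⬝ᵥ φ‖ ^ 2 : ℝ) : ℂ) *
            (star (v j) ⬝ᵥ (B *ᵥ v j))
        = ∑ P ∈ S, z P * Complex.exp (((ω P : ℝ) : ℂ) * Complex.I * t) := by
    intro t
    rw [hu t, hquad t]
    have hsplit : ∑ j, ∑ k, (starRingEnd ℂ) (a t j) * a t k * Bt j k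
        = (∑ P ∈ S, (starRingEnd ℂ) (a t P.1) * a t P.2 * Bt P.1 P.2)
          + ∑ j, (starRingEnd ℂ) (a t j) * a t j * Bt j j := by
      rw [← Finset.sum_product']
      rw [← Finset.sum_filter_add_sum_filter_not (Finset.univ ×ˢ Finset.univ)
        (fun p : Fin D × Fin D => p.1 ≠ p.2)]
      have hfirst : ∑ p ∈ Finset.filter (fun p : Fin D × Fin D => p.1 ≠ p.2)
            (Finset.univ ×ˢ Finset.univ), (starRingEnd ℂ) (a t p.1) * a t p.2 * Bt p.1 p.2
          = ∑ P ∈ S, (starRingEnd ℂ) (a t P.1) * a t P.2 * Bt P.1 P.2 := by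
        apply Finset.sum_congr _ (fun _ _ => rfl)
        rw [hS, Finset.univ_product_univ]
      have hnn : Finset.filter (fun p : Fin D × Fin D => ¬ p.1 ≠ p.2)
          (Finset.univ ×ˢ Finset.univ)
          = Finset.filter (fun p : Fin D × Fin D => p.1 = p.2)
            (Finset.univ ×ˢ Finset.univ) := by
        apply Finset.filter_congr
        intro p _
        simp
      have hsecond : ∑ p ∈ Finset.filter (fun p : Fin D × Fin D => ¬ p.1 ≠ p.2)
            (Finset.univ ×ˢ Finset.univ), (starRingEnd ℂ) (a t p.1) * a t p.2 * Bt p.1 p.2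
          = ∑ j, (starRingEnd ℂ) (a t j) * a t j * Bt j j := by
        rw [hnn]
        exact FluctAux.sum_diag (fun p => (starRingEnd ℂ) (a t p.1) * a t p.2 * Bt p.1 p.2)
      rw [hfirst, hsecond]
    rw [hsplit]
    have hdiagsum : ∑ j, (starRingEnd ℂ) (a t j) * a t j * Bt j j
        = ∑ j, ((‖star (v j) ⬝ᵥ φ‖ ^ 2 : ℝ) : ℂ) *
            (star (v j) ⬝ᵥ (B *ᵥ v j)) := by
      refine Finset.sum_congr rfl fun j _ => ?_
      have h0 := hT t (j, j)
      simp only at h0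
      rw [h0, hzdiag j]
      have h1 : ((ω (j, j) : ℝ) : ℂ) = 0 := by simp [hω]
      rw [h1]
      simp [hBt, hc]
    rw [hdiagsum, add_sub_cancel_right]
    exact Finset.sum_congr rfl fun P _ => hT t P
  -- the limit value
  refine ⟨∑ P ∈ S, ‖z P‖ ^ 2, ?_, ?_⟩
  · -- convergence
    have hecont : ∀ δ : ℝ, Continuous (fun t : ℝ => Complex.exp ((δ : ℂ) * Complex.I * t)) :=
      fun δ => Complex.continuous_exp.comp (continuous_const.mul Complex.continuous_ofReal)
    have hFeq : (fun τ : ℝ => (1 / τ) * ∫ t in (0:ℝ)..τ,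
          ‖(star (NormedSpace.exp ((-(t : ℂ) * Complex.I) • H) *ᵥ φ)) ⬝ᵥ
              (B *ᵥ (NormedSpace.exp ((-(t : ℂ) * Complex.I) • H) *ᵥ φ))
            - ∑ j, ((‖star (v j) ⬝ᵥ φ‖ ^ 2 : ℝ) : ℂ) *
                (star (v j) ⬝ᵥ (B *ᵥ v j))‖ ^ 2)
        = fun τ : ℝ => ∑ P ∈ S, ∑ Q ∈ S, ((z P * (starRingEnd ℂ) (z Q)) *
            ((1/τ : ℂ) * ∫ t in (0:ℝ)..τ,
              Complex.exp (((ω P - ω Q : ℝ) : ℂ) * Complex.I * t))).re := by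
      funext τ
      set G : ℝ → ℂ := fun t => ∑ P ∈ S, ∑ Q ∈ S, (z P * (starRingEnd ℂ) (z Q)) *
          Complex.exp (((ω P - ω Q : ℝ) : ℂ) * Complex.I * t) with hG
      have hGt : ∀ t : ℝ,
          ‖(star (NormedSpace.exp ((-(t : ℂ) * Complex.I) • H) *ᵥ φ)) ⬝ᵥ
              (B *ᵥ (NormedSpace.exp ((-(t : ℂ) * Complex.I) • H) *ᵥ φ))
            - ∑ j, ((‖star (v j) ⬝ᵥ φ‖ ^ 2 : ℝ) : ℂ) *
                (star (v j) ⬝ᵥ (B *ᵥ v j))‖ ^ 2 = (G t).re := by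
        intro t
        rw [hfd t, habs]
        congr 1
        rw [_root_.map_sum, Finset.sum_mul_sum, hG]
        refine Finset.sum_congr rfl fun P _ => Finset.sum_congr rfl fun Q _ => ?_
        rw [_root_.map_mul, ← Complex.exp_conj]
        have h1 : (starRingEnd ℂ) (((ω Q : ℝ) : ℂ) * Complex.I * t)
            = -(((ω Q : ℝ) : ℂ) * Complex.I * t) := by
          rw [_root_.map_mul, _root_.map_mul, Complex.conj_ofReal, Complex.conj_I, Complex.conj_ofReal]
          ring
        rw [h1]
        have h2 : Complex.exp (((ω P : ℝ) : ℂ) * Complex.I * t) *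
              Complex.exp (-(((ω Q : ℝ) : ℂ) * Complex.I * t))
            = Complex.exp (((ω P - ω Q : ℝ) : ℂ) * Complex.I * t) := by
          rw [← Complex.exp_add]
          congr 1
          push_cast
          ring
        calc z P * Complex.exp (((ω P : ℝ) : ℂ) * Complex.I * t) *
              ((starRingEnd ℂ) (z Q) * Complex.exp (-(((ω Q : ℝ) : ℂ) * Complex.I * t)))
            = (z P * (starRingEnd ℂ) (z Q)) *
                (Complex.exp (((ω P : ℝ) : ℂ) * Complex.I * t) *
                  Complex.exp (-(((ω Q : ℝ) : ℂ) * Complex.I * t))) := by ring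
          _ = _ := by rw [h2]
      have hGcont : Continuous G := by
        apply continuous_finset_sum
        intro P _
        apply continuous_finset_sum
        intro Q _
        exact continuous_const.mul (hecont _)
      have hGint : IntervalIntegrable G MeasureTheory.volume 0 τ :=
        hGcont.intervalIntegrable _ _
      have step2 : (∫ t in (0:ℝ)..τ, (G t).re) = (∫ t in (0:ℝ)..τ, G t).re := by
        have := ContinuousLinearMap.intervalIntegral_comp_comm Complex.reCLM hGint
        simpa using this
      have step3 : (∫ t in (0:ℝ)..τ, G t)
          = ∑ P ∈ S, ∑ Q ∈ S, (z P * (starRingEnd ℂ) (z Q)) *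
              ∫ t in (0:ℝ)..τ, Complex.exp (((ω P - ω Q : ℝ) : ℂ) * Complex.I * t) := by
        rw [hG, intervalIntegral.integral_finset_sum]
        · refine Finset.sum_congr rfl fun P _ => ?_
          rw [intervalIntegral.integral_finset_sum]
          · exact Finset.sum_congr rfl fun Q _ => intervalIntegral.integral_const_mul _ _
          · intro Q _
            exact (continuous_const.mul (hecont _)).intervalIntegrable _ _
        · intro P _
          exact (continuous_finset_sum _ fun Q _ =>
            continuous_const.mul (hecont _)).intervalIntegrable _ _
      rw [intervalIntegral.integral_congr (fun t _ => hGt t), step2, step3,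
        Complex.re_sum, Finset.mul_sum]
      refine Finset.sum_congr rfl fun P _ => ?_
      rw [Complex.re_sum, Finset.mul_sum]
      refine Finset.sum_congr rfl fun Q _ => ?_
      rw [← Complex.re_ofReal_mul]
      congr 1
      push_cast
      ring
    rw [hFeq]
    have hval : ∑ P ∈ S, ‖z P‖ ^ 2
        = ∑ P ∈ S, ∑ Q ∈ S, ((z P * (starRingEnd ℂ) (z Q)) *
            (if (ω P - ω Q : ℝ) = 0 then (1:ℂ) else 0)).re := by
      refine Finset.sum_congr rfl fun P hP => ?_
      have h1 : ∀ Q ∈ S, ((z P * (starRingEnd ℂ) (z Q)) *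
            (if (ω P - ω Q : ℝ) = 0 then (1:ℂ) else 0)).re
          = if Q = P then (z P * (starRingEnd ℂ) (z Q)).re else 0 := by
        intro Q hQ
        by_cases h : Q = P
        · subst h
          simp
        · have h2 : ¬ (ω P - ω Q = 0) := by
            intro h0
            exact h (hgapP Q hQ P hP (sub_eq_zero.mp h0).symm)
          simp [h2, h]
      rw [Finset.sum_congr rfl h1, Finset.sum_ite_eq' S P, if_pos hP, ← habs]
    rw [hval]
    apply tendsto_finset_sum
    intro P _
    apply tendsto_finset_sum
    intro Q _
    exact (Complex.continuous_re.tendsto _).comp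
      ((FluctAux.cesaro_exp (ω P - ω Q)).const_mul (z P * (starRingEnd ℂ) (z Q)))
  · -- the bound
    have hcsum1 : ∀ k, (∑ i, ‖v k i‖ ^ 2) = 1 := by
      intro k
      have h0 := horth k k
      rw [if_pos rfl, FluctAux.dot_star_self] at h0
      exact_mod_cast h0
    have colb : ∀ (M : Matrix (Fin D) (Fin D) ℂ) (k : Fin D),
        ∑ j, ‖star (v j) ⬝ᵥ (M *ᵥ v k)‖ ^ 2 ≤
          ‖(Matrix.toEuclideanCLM (𝕜 := ℂ) M :
              EuclideanSpace ℂ (Fin D) →L[ℂ] EuclideanSpace ℂ (Fin D))‖ ^ 2 := by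
      intro M k
      calc ∑ j, ‖star (v j) ⬝ᵥ (M *ᵥ v k)‖ ^ 2
          = ∑ j, ‖(Vᴴ *ᵥ (M *ᵥ v k)) j‖ ^ 2 := by
            refine Finset.sum_congr rfl fun j _ => ?_
            rw [hVdot]
        _ = ∑ i, ‖(M *ᵥ v k) i‖ ^ 2 := FluctAux.coords_sq_sum V hVV _
        _ ≤ _ * ∑ i, ‖v k i‖ ^ 2 := FluctAux.mulVec_l2_bound M (v k)
        _ = _ := by rw [hcsum1 k, mul_one]
    have hopeq : opNorm B = ‖(Matrix.toEuclideanCLM (𝕜 := ℂ) B :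
        EuclideanSpace ℂ (Fin D) →L[ℂ] EuclideanSpace ℂ (Fin D))‖ := rfl
    have colbB : ∀ k, ∑ j, ‖Bt j k‖ ^ 2 ≤ opNorm B ^ 2 := by
      intro k
      rw [hopeq]
      exact colb B k
    have rowb : ∀ j, ∑ k, ‖Bt j k‖ ^ 2 ≤ opNorm B ^ 2 := by
      intro j
      have h1 : ∀ k, ‖Bt j k‖ = ‖star (v k) ⬝ᵥ (Bᴴ *ᵥ v j)‖ := by
        intro k
        have h0 : Bt j k = (starRingEnd ℂ) (star (v k) ⬝ᵥ (Bᴴ *ᵥ v j)) := by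
          simp only [hBt, dotProduct, Matrix.mulVec, Matrix.conjTranspose_apply, _root_.map_sum,
            _root_.map_mul, Pi.star_apply, Complex.star_def, Complex.conj_conj]
          simp only [Finset.mul_sum]
          rw [Finset.sum_comm]
          refine Finset.sum_congr rfl fun i _ => Finset.sum_congr rfl fun l _ => by ring
        rw [h0, Complex.norm_conj]
      calc ∑ k, ‖Bt j k‖ ^ 2
          = ∑ k, ‖star (v k) ⬝ᵥ (Bᴴ *ᵥ v j)‖ ^ 2 := by
            refine Finset.sum_congr rfl fun k _ => ?_
            rw [h1]
        _ ≤ _ := colb Bᴴ j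
        _ = opNorm B ^ 2 := by rw [FluctAux.opNorm_conjTranspose' B, hopeq]
    have hbound : ∑ P ∈ S, ‖z P‖ ^ 2
        ≤ opNorm B ^ 2 * ∑ j, ‖c j‖ ^ 4 := by
      have h0 : ∑ P ∈ S, ‖z P‖ ^ 2
          ≤ ∑ P : Fin D × Fin D, ‖z P‖ ^ 2 := by
        apply Finset.sum_le_sum_of_subset_of_nonneg (Finset.filter_subset _ _)
        intro p _ _
        positivity
      have h1 : ∀ P : Fin D × Fin D, ‖z P‖ ^ 2
          = (‖c P.1‖ ^ 2 * ‖Bt P.1 P.2‖) *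
            (‖c P.2‖ ^ 2 * ‖Bt P.1 P.2‖) := by
        intro P
        simp only [hz, norm_mul, Complex.norm_conj]
        ring
      have h2 := Finset.sum_mul_sq_le_sq_mul_sq Finset.univ
        (fun P : Fin D × Fin D => ‖c P.1‖ ^ 2 * ‖Bt P.1 P.2‖)
        (fun P : Fin D × Fin D => ‖c P.2‖ ^ 2 * ‖Bt P.1 P.2‖)
      have hf2 : ∑ P : Fin D × Fin D,
            (‖c P.1‖ ^ 2 * ‖Bt P.1 P.2‖) ^ 2
          ≤ (∑ j, ‖c j‖ ^ 4) * opNorm B ^ 2 := by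
        rw [Fintype.sum_prod_type]
        calc ∑ j, ∑ k, (‖c j‖ ^ 2 * ‖Bt j k‖) ^ 2
            = ∑ j, (‖c j‖ ^ 4 * ∑ k, ‖Bt j k‖ ^ 2) := by
              refine Finset.sum_congr rfl fun j _ => ?_
              rw [Finset.mul_sum]
              refine Finset.sum_congr rfl fun k _ => ?_
              ring
          _ ≤ ∑ j, (‖c j‖ ^ 4 * opNorm B ^ 2) := by
              refine Finset.sum_le_sum fun j _ => ?_
              exact mul_le_mul_of_nonneg_left (rowb j) (by positivity)
          _ = _ := by rw [← Finset.sum_mul]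
      have hg2 : ∑ P : Fin D × Fin D,
            (‖c P.2‖ ^ 2 * ‖Bt P.1 P.2‖) ^ 2
          ≤ (∑ j, ‖c j‖ ^ 4) * opNorm B ^ 2 := by
        rw [Fintype.sum_prod_type_right]
        calc ∑ k, ∑ j, (‖c k‖ ^ 2 * ‖Bt j k‖) ^ 2
            = ∑ k, (‖c k‖ ^ 4 * ∑ j, ‖Bt j k‖ ^ 2) := by
              refine Finset.sum_congr rfl fun k _ => ?_
              rw [Finset.mul_sum]
              refine Finset.sum_congr rfl fun j _ => ?_
              ring
          _ ≤ ∑ k, (‖c k‖ ^ 4 * opNorm B ^ 2) := by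
              refine Finset.sum_le_sum fun k _ => ?_
              exact mul_le_mul_of_nonneg_left (colbB k) (by positivity)
          _ = _ := by rw [← Finset.sum_mul]
      have hM : (0:ℝ) ≤ (∑ j, ‖c j‖ ^ 4) * opNorm B ^ 2 := by positivity
      have h3 : (∑ P : Fin D × Fin D,
            (‖c P.1‖ ^ 2 * ‖Bt P.1 P.2‖) *
              (‖c P.2‖ ^ 2 * ‖Bt P.1 P.2‖)) ^ 2
          ≤ ((∑ j, ‖c j‖ ^ 4) * opNorm B ^ 2) ^ 2 := by
        calc _ ≤ _ := h2
        _ ≤ ((∑ j, ‖c j‖ ^ 4) * opNorm B ^ 2) ^ 2 := by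
          rw [sq]
          apply mul_le_mul hf2 hg2 _ hM
          positivity
      have h4 : ∑ P : Fin D × Fin D,
            (‖c P.1‖ ^ 2 * ‖Bt P.1 P.2‖) *
              (‖c P.2‖ ^ 2 * ‖Bt P.1 P.2‖)
          ≤ (∑ j, ‖c j‖ ^ 4) * opNorm B ^ 2 := by
        have hnn : (0:ℝ) ≤ ∑ P : Fin D × Fin D,
            (‖c P.1‖ ^ 2 * ‖Bt P.1 P.2‖) *
              (‖c P.2‖ ^ 2 * ‖Bt P.1 P.2‖) := by
          apply Finset.sum_nonneg
          intro p _
          positivity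
        exact (pow_le_pow_iff_left₀ hnn hM (by norm_num)).mp h3
      calc ∑ P ∈ S, ‖z P‖ ^ 2 ≤ ∑ P : Fin D × Fin D, ‖z P‖ ^ 2 := h0
        _ = ∑ P : Fin D × Fin D,
            (‖c P.1‖ ^ 2 * ‖Bt P.1 P.2‖) *
              (‖c P.2‖ ^ 2 * ‖Bt P.1 P.2‖) :=
          Finset.sum_congr rfl fun P _ => h1 P
        _ ≤ (∑ j, ‖c j‖ ^ 4) * opNorm B ^ 2 := h4
        _ = opNorm B ^ 2 * ∑ j, ‖c j‖ ^ 4 := by ring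
    rw [div_eq_mul_inv, inv_inv]
    exact hbound.trans_eq rfl


end
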